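/- Let A be a complex Banach algebra possessing a contractive approximate identity, and let H be a Hilbert A-module, with representation ρ : A → B(H), which is sub-tracing. Then ρ(A)'' is contained in alg lat ρ(A): every operator T in the double commutant ρ(A)'' maps each closed subspace of H that is invariant under ρ(A) into itself. -/

import Mathlib

noncomputable section

open Filter

open scoped ENNReal

/-- A contractive approximate identity for a (possibly non-unital) normed algebra `A`:
a net `(e i)`, indexed by a nontrivial filter, with `‖e i‖ ≤ 1` for all `i`, such that
`e i * a → a` and `a * e i → a` in norm for every `a ∈ A`. -/
def HasCAI (A : Type) [NonUnitalNormedRing A] : Prop :=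
  ∃ (ι : Type) (l : Filter ι) (e : ι → A), l.NeBot ∧ (∀ i, ‖e i‖ ≤ 1) ∧
    ∀ a : A, Tendsto (fun i => e i * a) l (nhds a) ∧ Tendsto (fun i => a * e i) l (nhds a)

variable (A : Type) [NonUnitalNormedRing A] [NormedSpace ℂ A] [IsScalarTower ℂ A A]
  [SMulCommClass ℂ A A]

/-- A Hilbert `A`-module structure on the Hilbert space `K`: a contractive algebra
homomorphism `π : A → B(K)` which is nondegenerate, i.e. the linear span of
`{π a x : a ∈ A, x ∈ K}` is dense in `K`. -/
def IsHilbertRep {K : Type} [NormedAddCommGroup K] [InnerProductSpace ℂ K] [CompleteSpace K]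
    (π : A →ₙₐ[ℂ] (K →L[ℂ] K)) : Prop :=
  (∀ a : A, ‖π a‖ ≤ ‖a‖) ∧
  Dense ((Submodule.span ℂ {x : K | ∃ (a : A) (y : K), π a y = x} : Submodule ℂ K) : Set K)

/-- A bounded `A`-module map between Hilbert `A`-modules. -/
def IsModuleMap {K L : Type} [NormedAddCommGroup K] [InnerProductSpace ℂ K]
    [NormedAddCommGroup L] [InnerProductSpace ℂ L]
    (πK : A →ₙₐ[ℂ] (K →L[ℂ] K)) (πL : A →ₙₐ[ℂ] (L →L[ℂ] L)) (T : K →L[ℂ] L) : Prop :=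
  ∀ (a : A) (x : K), T (πK a x) = πL a (T x)

/-- `H` is sub-tracing: for every closed `A`-invariant subspace `E` of `H` (a Hilbert
`A`-module under the restricted action), every Hilbert `A`-module `L`, and every nonzero
bounded `A`-module map `R : E → L`, there exists a bounded `A`-module map `V : H → E`
with `R ∘ V ≠ 0`. -/
def IsSubTracing {H : Type} [NormedAddCommGroup H] [InnerProductSpace ℂ H] [CompleteSpace H]
    (πH : A →ₙₐ[ℂ] (H →L[ℂ] H)) : Prop :=
  ∀ (E : Submodule ℂ H), IsClosed (E : Set H) →
    ∀ (hinv : ∀ (a : A), ∀ x ∈ E, πH a x ∈ E),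
    ∀ (L : Type) [NormedAddCommGroup L] [InnerProductSpace ℂ L] [CompleteSpace L],
    ∀ (πL : A →ₙₐ[ℂ] (L →L[ℂ] L)), IsHilbertRep A πL →
    ∀ R : ↥E →L[ℂ] L,
      (∀ (a : A) (x : ↥E), R ⟨πH a ↑x, hinv a ↑x x.2⟩ = πL a (R x)) → R ≠ 0 →
      ∃ V : H →L[ℂ] ↥E,
        (∀ (a : A) (x : H), (↑(V (πH a x)) : H) = πH a ↑(V x)) ∧ R.comp V ≠ 0

set_option maxHeartbeats 1600000 in
/-- If the Hilbert `A`-module `H` is sub-tracing, then the double commutant `ρ(A)''` is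
contained in `alg lat ρ(A)`: every operator in `ρ(A)''` maps each closed `ρ(A)`-invariant
subspace of `H` into itself. -/
theorem subtracing_bicommutant_subset_algLat [CompleteSpace A] (hA : HasCAI A)
    (H : Type) [NormedAddCommGroup H] [InnerProductSpace ℂ H] [CompleteSpace H]
    (ρ : A →ₙₐ[ℂ] (H →L[ℂ] H)) (hrep : IsHilbertRep A ρ) (hsub : IsSubTracing A ρ) :
    ∀ x ∈ Set.centralizer (Set.centralizer (Set.range ⇑ρ)),
      ∀ (E : Submodule ℂ H), IsClosed (E : Set H) → (∀ (a : A), ∀ y ∈ E, ρ a y ∈ E) →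
        ∀ y ∈ E, x y ∈ E := by
  classical
  obtain ⟨ι, l, e, hl, he1, hconv⟩ := hA
  haveI := hl
  intro T hT E hE hinv y hy
  by_contra hTy
  -- contractivity facts
  have hcontr : ∀ a : A, ‖ρ a‖ ≤ ‖a‖ := hrep.1
  have hρ_le : ∀ (a : A) (x : H), ‖ρ a x‖ ≤ ‖a‖ * ‖x‖ := by
    intro a x
    calc ‖ρ a x‖ ≤ ‖ρ a‖ * ‖x‖ := (ρ a).le_opNorm x
    _ ≤ ‖a‖ * ‖x‖ := by gcongr; exact hcontr a
  -- strong convergence of the c.a.i.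
  have hkey0 : ∀ x ∈ (Submodule.span ℂ {x : H | ∃ (a : A) (y : H), ρ a y = x} : Submodule ℂ H),
      Tendsto (fun i => ρ (e i) x) l (nhds x) := by
    intro x hx
    induction hx using Submodule.span_induction with
    | mem x hx =>
      obtain ⟨a, w, rfl⟩ := hx
      have hcont : Continuous (fun b : A => ρ b w) := by
        apply (LipschitzWith.of_dist_le_mul (K := ‖w‖₊) ?_).continuous
        intro b b'
        rw [dist_eq_norm, dist_eq_norm]
        have h1 : ρ b w - ρ b' w = ρ (b - b') w := by
          rw [map_sub]; rfl
        rw [h1]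
        calc ‖ρ (b - b') w‖ ≤ ‖b - b'‖ * ‖w‖ := hρ_le _ _
        _ = (‖w‖₊ : ℝ) * ‖b - b'‖ := by rw [mul_comm]; rfl
      have : Tendsto (fun i => ρ (e i * a) w) l (nhds (ρ a w)) :=
        (hcont.tendsto a).comp (hconv a).1
      simpa [map_mul] using this
    | zero => simpa using (tendsto_const_nhds : Tendsto (fun _ : ι => (0 : H)) l _)
    | add u v hu hv hu' hv' =>
      simpa [map_add] using hu'.add hv'
    | smul c u hu hu' =>
      simpa [map_smul] using hu'.const_smul c
  have hstrong : ∀ x : H, Tendsto (fun i => ρ (e i) x) l (nhds x) := by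
    intro x
    rw [Metric.tendsto_nhds]
    intro ε hε
    have hx := hrep.2 x
    obtain ⟨z, hz, hzx⟩ := Metric.mem_closure_iff.mp hx (ε / 3) (by positivity)
    have h1 := Metric.tendsto_nhds.mp (hkey0 z hz) (ε / 3) (by positivity)
    filter_upwards [h1] with i hi
    have hb : ‖ρ (e i) (x - z)‖ ≤ ‖x - z‖ := by
      calc ‖ρ (e i) (x - z)‖ ≤ ‖e i‖ * ‖x - z‖ := hρ_le _ _
      _ ≤ 1 * ‖x - z‖ := by gcongr; exact he1 i
      _ = ‖x - z‖ := one_mul _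
    have : dist (ρ (e i) x) x ≤ dist (ρ (e i) x) (ρ (e i) z) + dist (ρ (e i) z) z + dist z x :=
      dist_triangle4 _ _ _ _
    have h2 : dist (ρ (e i) x) (ρ (e i) z) ≤ dist x z := by
      rw [dist_eq_norm, dist_eq_norm, ← map_sub]
      exact hb
    have hzx' : dist z x < ε / 3 := by rw [dist_comm]; exact hzx
    have hxz : dist x z < ε / 3 := hzx
    linarith [this, h2, hi, hzx']
  -- the submodule N
  set S : Set H := {x : H | ∃ V : H →L[ℂ] ↥E,
      (∀ (a : A) (z : H), (↑(V (ρ a z)) : H) = ρ a ↑(V z)) ∧ ∃ z : H, (↑(V z) : H) = x} with hS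
  set N : Submodule ℂ H := (Submodule.span ℂ S).topologicalClosure with hN
  have hSE : S ⊆ (E : Set H) := by
    rintro x ⟨V, hV, z, rfl⟩
    exact (V z).2
  have hNE : N ≤ E := Submodule.topologicalClosure_minimal _ (Submodule.span_le.mpr hSE) hE
  have hNclosed : IsClosed (N : Set H) := Submodule.isClosed_topologicalClosure _
  have hSinv : ∀ a : A, ∀ x ∈ S, ρ a x ∈ S := by
    rintro a x ⟨V, hV, z, rfl⟩
    exact ⟨V, hV, ρ a z, hV a z⟩
  have hspaninv : ∀ a : A, ∀ x ∈ Submodule.span ℂ S, ρ a x ∈ Submodule.span ℂ S := by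
    intro a x hx
    induction hx using Submodule.span_induction with
    | mem u hu => exact Submodule.subset_span (hSinv a u hu)
    | zero => simpa using (Submodule.span ℂ S).zero_mem
    | add u v _ _ hu' hv' => rw [map_add]; exact Submodule.add_mem _ hu' hv'
    | smul c u _ hu' => rw [map_smul]; exact Submodule.smul_mem _ c hu'
  have hNinv : ∀ a : A, ∀ x ∈ N, ρ a x ∈ N := by
    intro a x hx
    have hx' : x ∈ closure ((Submodule.span ℂ S : Submodule ℂ H) : Set H) := hx
    exact map_mem_closure (ρ a).continuous hx' (hspaninv a)
  -- T maps N into E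
  have hTN : ∀ x ∈ N, T x ∈ E := by
    have hTS : ∀ x ∈ S, T x ∈ E := by
      rintro x ⟨V, hV, z, rfl⟩
      set W : H →L[ℂ] H := E.subtypeL.comp V with hW
      have hWmem : W ∈ Set.centralizer (Set.range ⇑ρ) := by
        rw [Set.mem_centralizer_iff]
        rintro g ⟨a, rfl⟩
        ext u
        simp only [ContinuousLinearMap.mul_apply, hW, ContinuousLinearMap.comp_apply,
          Submodule.subtypeL_apply]
        exact (hV a u).symm
      have hcomm := hT W hWmem
      have := congrArg (fun f : H →L[ℂ] H => f z) hcomm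
      simp only [ContinuousLinearMap.mul_apply, hW, ContinuousLinearMap.comp_apply,
        Submodule.subtypeL_apply] at this
      rw [← this]
      exact (V (T z)).2
    have hle : N ≤ Submodule.comap (T : H →ₗ[ℂ] H) E := by
      apply Submodule.topologicalClosure_minimal
      · exact Submodule.span_le.mpr hTS
      · exact hE.preimage T.continuous
    exact fun x hx => hle hx
  have hyN : y ∉ N := fun h => hTy (hTN y h)
  -- set up the quotient-like module L = Mᗮ inside E
  haveI : CompleteSpace ↥E := hE.completeSpace_coe
  set M : Submodule ℂ ↥E := N.comap E.subtype with hM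
  have hMclosed : IsClosed (M : Set ↥E) := by
    have : (M : Set ↥E) = (fun x : ↥E => (x : H)) ⁻¹' (N : Set H) := rfl
    rw [this]
    exact hNclosed.preimage continuous_subtype_val
  haveI : CompleteSpace ↥M := hMclosed.completeSpace_coe
  set L : Submodule ℂ ↥E := Mᗮ with hL
  haveI : CompleteSpace ↥L := M.isClosed_orthogonal.completeSpace_coe
  set P : ↥E →L[ℂ] ↥L := Submodule.orthogonalProjectionOnto L with hP
  -- the restricted action on E
  set opE : A → (↥E →L[ℂ] ↥E) :=
    fun a => ((ρ a).comp E.subtypeL).codRestrict E (fun x => hinv a x x.2) with hopE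
  have hopE_coe : ∀ (a : A) (x : ↥E), (↑(opE a x) : H) = ρ a ↑x := fun a x => rfl
  have hMinv : ∀ (a : A), ∀ w : ↥E, w ∈ M → opE a w ∈ M := by
    intro a w hw
    have : (↑(opE a w) : H) ∈ N := by rw [hopE_coe]; exact hNinv a _ hw
    exact this
  have hPzero : ∀ w : ↥E, w ∈ M → P w = 0 := by
    intro w hw
    exact Submodule.orthogonalProjectionOnto_apply_of_mem_orthogonal
      (M.le_orthogonal_orthogonal hw)
  have hPdecomp : ∀ (a : A) (v : ↥E),
      P (opE a v) = P (opE a (L.subtypeL (P v))) := by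
    intro a v
    have hv : v = ↑(Submodule.orthogonalProjectionOnto M v) + L.subtypeL (P v) := by
      exact (Submodule.starProjection_add_starProjection_orthogonal (K := M) v).symm
    conv_lhs => rw [hv]
    rw [map_add, map_add, hPzero _ (hMinv a _ (Submodule.orthogonalProjectionOnto M v).2), zero_add]
  -- the representation on L
  set f : A → (↥L →L[ℂ] ↥L) := fun a => P.comp ((opE a).comp L.subtypeL) with hf
  have hopE_add : ∀ a b : A, opE (a + b) = opE a + opE b := by
    intro a b; ext x
    simp only [ContinuousLinearMap.add_apply, Submodule.coe_add, hopE_coe, map_add]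
  have hopE_smul : ∀ (c : ℂ) (a : A), opE (c • a) = c • opE a := by
    intro c a; ext x
    simp only [ContinuousLinearMap.smul_apply, Submodule.coe_smul, hopE_coe, map_smul]
  have hopE_zero : opE 0 = 0 := by
    ext x
    simp only [ContinuousLinearMap.zero_apply, hopE_coe, map_zero]
    rfl
  have hopE_mul : ∀ a b : A, opE (a * b) = (opE a).comp (opE b) := by
    intro a b; ext x
    simp only [ContinuousLinearMap.comp_apply, hopE_coe, map_mul,
      ContinuousLinearMap.mul_apply]
  set πL : A →ₙₐ[ℂ] (↥L →L[ℂ] ↥L) :=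
    { toFun := f
      map_smul' := by intro c a; simp only [hf, hopE_smul]; ext x; simp
      map_zero' := by simp only [hf, hopE_zero]; ext x; simp
      map_add' := by intro a b; simp only [hf, hopE_add]; ext x; simp
      map_mul' := by
        intro a b
        ext x
        simp only [hf, ContinuousLinearMap.mul_apply, ContinuousLinearMap.comp_apply,
          hopE_mul]
        exact congrArg (fun t : ↥L => ((t : ↥E) : H)) (hPdecomp a (opE b (L.subtypeL x))) } with hπL
  have hπL_apply : ∀ (a : A) (x : ↥L), πL a x = P (opE a (L.subtypeL x)) := fun a x => rfl
  -- πL is a Hilbert representation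
  have hLnorm : ∀ a : A, ‖πL a‖ ≤ ‖a‖ := by
    intro a
    apply ContinuousLinearMap.opNorm_le_bound _ (norm_nonneg a)
    intro x
    rw [hπL_apply]
    calc ‖P (opE a (L.subtypeL x))‖ ≤ ‖P‖ * ‖opE a (L.subtypeL x)‖ := P.le_opNorm _
    _ ≤ 1 * ‖opE a (L.subtypeL x)‖ := by gcongr; exact Submodule.orthogonalProjectionOnto_norm_le L
    _ = ‖ρ a (↑(L.subtypeL x) : H)‖ := by rw [one_mul]; rfl
    _ ≤ ‖a‖ * ‖(↑(L.subtypeL x) : H)‖ := hρ_le _ _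
    _ = ‖a‖ * ‖x‖ := rfl
  have hLdense : Dense ((Submodule.span ℂ
      {x : ↥L | ∃ (a : A) (w : ↥L), πL a w = x} : Submodule ℂ ↥L) : Set ↥L) := by
    intro x
    apply mem_closure_of_tendsto (f := fun i => πL (e i) x) (b := l)
    · -- tendsto πL (e i) x → x
      have h1 : Tendsto (fun i => opE (e i) (L.subtypeL x)) l (nhds (L.subtypeL x)) := by
        rw [tendsto_subtype_rng]
        exact hstrong ((L.subtypeL x : H))
      have h2 := (P.continuous.tendsto (L.subtypeL x)).comp h1
      have h3 : P (L.subtypeL x) = x := by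
        rw [hP]
        exact Submodule.orthogonalProjectionOnto_mem_subspace_eq_self x
      simp only [hπL_apply]
      have h2' : Tendsto (fun i => P (opE (e i) (L.subtypeL x))) l (nhds (P (L.subtypeL x))) := h2
      rwa [h3] at h2'
    · filter_upwards with i
      exact Submodule.subset_span ⟨e i, x, rfl⟩
  -- the module map R
  set R : ↥E →L[ℂ] ↥L := P with hR
  have hRmod : ∀ (a : A) (x : ↥E), R ⟨ρ a ↑x, hinv a ↑x x.2⟩ = πL a (R x) := by
    intro a x
    have h1 : (⟨ρ a ↑x, hinv a ↑x x.2⟩ : ↥E) = opE a x := by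
      apply Subtype.ext; rw [hopE_coe]
    rw [h1, hR, hπL_apply, hPdecomp a x]
  have hRne : R ≠ 0 := by
    intro h0
    have h1 : R ⟨y, hy⟩ = 0 := by rw [h0]; rfl
    have h2 : (⟨y, hy⟩ : ↥E) ∈ Lᗮ := Submodule.orthogonalProjectionOnto_eq_zero_iff.mp h1
    rw [hL, Submodule.orthogonal_orthogonal] at h2
    exact hyN h2
  obtain ⟨V, hV, hRV⟩ := hsub E hE hinv ↥L πL ⟨hLnorm, hLdense⟩ R hRmod hRne
  apply hRV
  ext z
  have hz : (↑(V z) : H) ∈ S := ⟨V, hV, z, rfl⟩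
  have hz' : V z ∈ M := Submodule.le_topologicalClosure _ (Submodule.subset_span hz)
  simp only [ContinuousLinearMap.comp_apply, ContinuousLinearMap.zero_apply]
  exact congrArg (fun t : ↥L => ((t : ↥E) : H)) (hPzero _ hz')
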